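/- Let R be a semilocal commutative ring with 2 invertible, (A, σ) an R-algebra with involution such that A is finite over R, and ε ∈ Cent(A) with ε^σ ε = 1. Suppose that for every maximal ideal m of R there exists an element a_m ∈ A(m) := A ⊗_R k(m) with ε a_m^σ = a_m and a_m invertible in A(m). Then there exists a ∈ A with ε a^σ = a and a ∈ A×. -/

import Mathlib

open TensorProduct

theorem aux_prod_smul_top {R M ι : Type*} [DecidableEq ι] [CommRing R] [AddCommGroup M] [Module R M]
    (f : ι → Ideal R) (s : Finset ι) (h : ∀ i ∈ s, f i • (⊤ : Submodule R M) = ⊤) :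
    (∏ i ∈ s, f i) • (⊤ : Submodule R M) = ⊤ := by
  induction s using Finset.induction_on with
  | empty => simp [Ideal.one_eq_top, Submodule.top_smul]
  | insert _ _ hns ih =>
    rename_i a s'
    rw [Finset.prod_insert hns, mul_smul,
      ih (fun i hi => h i (Finset.mem_insert_of_mem hi)),
      h a (Finset.mem_insert_self a s')]

theorem aux_nakayama {R M : Type*} [CommRing R] [AddCommGroup M] [Module R M]
    [Module.Finite R M] [Finite (MaximalSpectrum R)]
    (N : Submodule R M) (hN : ∀ m : Ideal R, m.IsMaximal → N ⊔ m • ⊤ = ⊤) :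
    N = ⊤ := by
  classical
  have := Fintype.ofFinite (MaximalSpectrum R)
  have hQ : ∀ m : Ideal R, m.IsMaximal → m • (⊤ : Submodule R (M ⧸ N)) = ⊤ := by
    intro m hm
    have h1 := congrArg (Submodule.map N.mkQ) (hN m hm)
    rw [Submodule.map_sup, Submodule.map_smul'', Submodule.map_top, Submodule.range_mkQ] at h1
    have h2 : N.map N.mkQ = ⊥ := by
      rw [eq_bot_iff]
      rintro x ⟨y, hy, rfl⟩
      simpa using (Submodule.Quotient.mk_eq_zero N).2 hy
    rwa [h2, bot_sup_eq] at h1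
  set P : Ideal R := ∏ m : MaximalSpectrum R, m.asIdeal with hP
  have hPtop : P • (⊤ : Submodule R (M ⧸ N)) = ⊤ :=
    aux_prod_smul_top _ _ (fun m _ => hQ m.asIdeal m.2)
  have hPle : P ≤ Ideal.jacobson ⊥ := by
    apply le_sInf
    rintro J ⟨-, hJ⟩
    obtain ⟨C, hC⟩ := Finset.dvd_prod_of_mem (fun m : MaximalSpectrum R => m.asIdeal)
      (Finset.mem_univ (⟨J, hJ⟩ : MaximalSpectrum R))
    rw [hP, hC]
    exact Ideal.mul_le_left
  have hbot : (⊤ : Submodule R (M ⧸ N)) = ⊥ :=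
    Submodule.eq_bot_of_le_smul_of_le_jacobson_bot P ⊤ Module.Finite.fg_top hPtop.ge hPle
  rw [← Submodule.Quotient.subsingleton_iff]
  exact subsingleton_of_forall_eq 0 fun x => by
    simpa using (hbot ▸ Submodule.mem_top : x ∈ (⊥ : Submodule R (M ⧸ N)))

theorem aux_tmul_surj {R A : Type*} [CommRing R] [AddCommGroup A] [Module R A]
    (I : Ideal R) (t : (R ⧸ I) ⊗[R] A) : ∃ x : A, (1 : R ⧸ I) ⊗ₜ[R] x = t := by
  obtain ⟨x, hx⟩ := Submodule.Quotient.mk_surjective _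
    (TensorProduct.quotTensorEquivQuotSMul A I t)
  refine ⟨x, (TensorProduct.quotTensorEquivQuotSMul A I).injective ?_⟩
  rw [show (1 : R ⧸ I) = Ideal.Quotient.mk I 1 from rfl,
    TensorProduct.quotTensorEquivQuotSMul_mk_tmul, one_smul, hx]

theorem aux_tmul_eq {R A : Type*} [CommRing R] [AddCommGroup A] [Module R A]
    (I : Ideal R) (x y : A) (hxy : (1 : R ⧸ I) ⊗ₜ[R] x = (1 : R ⧸ I) ⊗ₜ[R] y) :
    x - y ∈ I • (⊤ : Submodule R A) := by
  have := congrArg (TensorProduct.quotTensorEquivQuotSMul A I) hxy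
  rw [show (1 : R ⧸ I) = Ideal.Quotient.mk I 1 from rfl,
    TensorProduct.quotTensorEquivQuotSMul_mk_tmul,
    TensorProduct.quotTensorEquivQuotSMul_mk_tmul, one_smul, one_smul,
    Submodule.Quotient.eq] at this
  exact this

theorem aux_isUnit {R A : Type*} [CommRing R] [Ring A] [Algebra R A]
    [Finite (MaximalSpectrum R)] [Module.Finite R A] (x : A)
    (hx : ∀ m : Ideal R, m.IsMaximal →
      IsUnit ((1 : R ⧸ m) ⊗ₜ[R] x : (R ⧸ m) ⊗[R] A)) : IsUnit x := by
  have key : ∀ (g : A →ₗ[R] A), (∀ m : Ideal R, m.IsMaximal →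
      ∀ z : A, ∃ w : A, (1 : R ⧸ m) ⊗ₜ[R] (g w) = (1 : R ⧸ m) ⊗ₜ[R] z) →
      ∃ c, g c = 1 := by
    intro g hg
    have htop : LinearMap.range g = ⊤ := by
      apply aux_nakayama
      intro m hm
      rw [eq_top_iff]
      rintro z -
      obtain ⟨w, hw⟩ := hg m hm z
      have hz : z = g w + (z - g w) := by abel
      rw [hz]
      exact Submodule.add_mem_sup (LinearMap.mem_range_self g w)
        (by simpa using aux_tmul_eq m (z) (g w) (hw.symm))
    obtain ⟨c, hc⟩ := LinearMap.range_eq_top.1 htop 1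
    exact ⟨c, hc⟩
  have hleft : ∃ c, c * x = 1 := by
    have hg : ∀ m : Ideal R, m.IsMaximal → ∀ z : A, ∃ w : A,
        (1 : R ⧸ m) ⊗ₜ[R] ((LinearMap.mulRight R x) w) = (1 : R ⧸ m) ⊗ₜ[R] z := by
      intro m hm z
      obtain ⟨u, hu⟩ := hx m hm
      obtain ⟨w, hw⟩ := aux_tmul_surj m (((1 : R ⧸ m) ⊗ₜ[R] z) * ((u⁻¹ : _ˣ) : (R ⧸ m) ⊗[R] A))
      refine ⟨w, ?_⟩
      have : (1 : R ⧸ m) ⊗ₜ[R] (w * x) = ((1 : R ⧸ m) ⊗ₜ[R] w) * ((1 : R ⧸ m) ⊗ₜ[R] x) := by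
        rw [Algebra.TensorProduct.tmul_mul_tmul, one_mul]
      rw [LinearMap.mulRight_apply, this, hw, ← hu]
      simp [mul_assoc]
    exact key _ hg
  have hright : ∃ d, x * d = 1 := by
    have hg : ∀ m : Ideal R, m.IsMaximal → ∀ z : A, ∃ w : A,
        (1 : R ⧸ m) ⊗ₜ[R] ((LinearMap.mulLeft R x) w) = (1 : R ⧸ m) ⊗ₜ[R] z := by
      intro m hm z
      obtain ⟨u, hu⟩ := hx m hm
      obtain ⟨w, hw⟩ := aux_tmul_surj m (((u⁻¹ : _ˣ) : (R ⧸ m) ⊗[R] A) * ((1 : R ⧸ m) ⊗ₜ[R] z))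
      refine ⟨w, ?_⟩
      have : (1 : R ⧸ m) ⊗ₜ[R] (x * w) = ((1 : R ⧸ m) ⊗ₜ[R] x) * ((1 : R ⧸ m) ⊗ₜ[R] w) := by
        rw [Algebra.TensorProduct.tmul_mul_tmul, one_mul]
      rw [LinearMap.mulLeft_apply, this, hw, ← hu]
      simp [← mul_assoc]
    exact key _ hg
  obtain ⟨c, hc⟩ := hleft
  obtain ⟨d, hd⟩ := hright
  have hcd : c = d := by
    calc c = c * (x * d) := by rw [hd, mul_one]
    _ = (c * x) * d := by rw [mul_assoc]
    _ = d := by rw [hc, one_mul]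
  exact isUnit_iff_exists.2 ⟨d, hd, by rw [← hcd, hc]⟩

theorem aux_partition {R : Type*} [CommRing R] [Finite (MaximalSpectrum R)]
    (m₀ : MaximalSpectrum R) : ∃ e : R, e - 1 ∈ m₀.asIdeal ∧
      ∀ m : MaximalSpectrum R, m ≠ m₀ → e ∈ m.asIdeal := by
  classical
  have := Fintype.ofFinite (MaximalSpectrum R)
  set P : Ideal R := ∏ m ∈ Finset.univ.erase m₀, m.asIdeal with hP
  have hsup : m₀.asIdeal ⊔ P = ⊤ := by
    rw [← Ideal.isCoprime_iff_sup_eq]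
    apply IsCoprime.prod_right
    intro m hm
    rw [Ideal.isCoprime_iff_sup_eq]
    refine m₀.2.coprime_of_ne m.2 fun hEq => (Finset.mem_erase.1 hm).1 ?_
    exact MaximalSpectrum.ext hEq.symm
  have h1 : (1 : R) ∈ m₀.asIdeal ⊔ P := hsup ▸ Submodule.mem_top
  obtain ⟨y, hy, z, hz, hyz⟩ := Submodule.mem_sup.1 h1
  refine ⟨z, ?_, ?_⟩
  · have : z - 1 = -y := by rw [← hyz]; ring
    rw [this]
    exact neg_mem hy
  · intro m hm
    obtain ⟨C, hC⟩ := Finset.dvd_prod_of_mem (fun m : MaximalSpectrum R => m.asIdeal)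
      (Finset.mem_erase.2 ⟨hm, Finset.mem_univ m⟩)
    rw [hP] at hz
    rw [hC] at hz
    exact Ideal.mul_le_left hz

/-- Let `R` be a semilocal commutative ring with `2` invertible, `(A, σ)` a finite
`R`-algebra with `R`-linear involution, and `ε` central with `σ ε * ε = 1`.  If for every
maximal ideal `m` of `R` there is an invertible `ε`-symmetric element in
`A(m) = (R ⧸ m) ⊗[R] A`, then there is an invertible `ε`-symmetric element in `A`. -/
theorem stmt_14 {R A : Type*} [CommRing R] [Ring A] [Algebra R A]
    (h2 : IsUnit (2 : R)) [Finite (MaximalSpectrum R)] [Module.Finite R A]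
    (σ : A →ₗ[R] A)
    (hmulσ : ∀ x y, σ (x * y) = σ y * σ x)
    (hone : σ 1 = 1) (hinvol : ∀ x, σ (σ x) = x)
    (ε : A) (hεc : ε ∈ Set.center A) (hε : σ ε * ε = 1)
    (h : ∀ m : Ideal R, m.IsMaximal →
      ∃ a : (R ⧸ m) ⊗[R] A,
        ((1 : R ⧸ m) ⊗ₜ[R] ε) * (LinearMap.baseChange (R ⧸ m) σ) a = a ∧ IsUnit a) :
    ∃ a : A, ε * σ a = a ∧ IsUnit a := by
  classical
  have := Fintype.ofFinite (MaximalSpectrum R)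
  choose a ha hu using fun m : MaximalSpectrum R => h m.asIdeal m.2
  choose b hb using fun m : MaximalSpectrum R => aux_tmul_surj m.asIdeal (a m)
  choose e he1 he2 using fun m : MaximalSpectrum R => aux_partition m
  set b0 : A := ∑ m : MaximalSpectrum R, e m • b m with hb0
  have hfb : ∀ m : MaximalSpectrum R, (1 : R ⧸ m.asIdeal) ⊗ₜ[R] b0 = a m := by
    intro m
    rw [hb0, TensorProduct.tmul_sum,
      Finset.sum_eq_single m ?h1 (fun hmem => absurd (Finset.mem_univ m) hmem)]
    · rw [TensorProduct.tmul_smul, hb m, ← algebraMap_smul (R ⧸ m.asIdeal) (e m) (a m),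
        Ideal.Quotient.algebraMap_eq]
      have : Ideal.Quotient.mk m.asIdeal (e m) = 1 := by
        have := Ideal.Quotient.eq.mpr (he1 m)
        rwa [map_one] at this
      rw [this, one_smul]
    case h1 =>
      intro m' _ hm'
      rw [TensorProduct.tmul_smul, ← algebraMap_smul (R ⧸ m.asIdeal) (e m') ((1 : R ⧸ m.asIdeal) ⊗ₜ[R] b m'),
        Ideal.Quotient.algebraMap_eq, Ideal.Quotient.eq_zero_iff_mem.mpr (he2 m' m ?_), zero_smul]
      exact fun hEq => hm' hEq.symm
  -- central facts about σ ε
  have hσεc : ∀ x : A, σ ε * x = x * σ ε := by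
    intro x
    have e1 : σ (σ x * ε) = σ ε * x := by rw [hmulσ, hinvol]
    have e2 : σ (ε * σ x) = x * σ ε := by rw [hmulσ, hinvol]
    rw [← e1, ← e2, hεc.comm (σ x)]
  have hεσε : ε * σ ε = 1 := (hεc.comm (σ ε)).trans hε
  set a0 : A := ((h2.unit⁻¹ : Rˣ) : R) • (b0 + ε * σ b0) with ha0
  have hsym : ε * σ a0 = a0 := by
    have e1 : σ (ε * σ b0) = b0 * σ ε := by rw [hmulσ, hinvol]
    have e2 : ε * (b0 * σ ε) = b0 := by
      rw [← mul_assoc, hεc.comm b0, mul_assoc, hεσε, mul_one]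
    calc ε * σ a0 = ((h2.unit⁻¹ : Rˣ) : R) • (ε * (σ b0 + σ (ε * σ b0))) := by
          rw [ha0, map_smul, map_add, mul_smul_comm]
      _ = ((h2.unit⁻¹ : Rˣ) : R) • (b0 + ε * σ b0) := by
          rw [e1, mul_add, e2, add_comm]
      _ = a0 := ha0.symm
  have hfa : ∀ m : MaximalSpectrum R, (1 : R ⧸ m.asIdeal) ⊗ₜ[R] a0 = a m := by
    intro m
    have t1 : (1 : R ⧸ m.asIdeal) ⊗ₜ[R] (ε * σ b0)
        = ((1 : R ⧸ m.asIdeal) ⊗ₜ[R] ε) * ((1 : R ⧸ m.asIdeal) ⊗ₜ[R] σ b0) := by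
      rw [Algebra.TensorProduct.tmul_mul_tmul, one_mul]
    have t2 : (1 : R ⧸ m.asIdeal) ⊗ₜ[R] σ b0
        = LinearMap.baseChange (R ⧸ m.asIdeal) σ ((1 : R ⧸ m.asIdeal) ⊗ₜ[R] b0) := by
      rw [LinearMap.baseChange_tmul]
    have hscal : ((h2.unit⁻¹ : Rˣ) : R) * 2 = 1 := by
      calc ((h2.unit⁻¹ : Rˣ) : R) * 2 = ((h2.unit⁻¹ : Rˣ) : R) * ((h2.unit : Rˣ) : R) := by
            rw [h2.unit_spec]
        _ = 1 := Units.inv_mul _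
    have t3 : ((h2.unit⁻¹ : Rˣ) : R) • (a m + a m) = a m := by
      rw [← two_smul R (a m), smul_smul]
      exact (congrArg (fun r : R => r • a m) hscal).trans (one_smul R (a m))
    rw [ha0, TensorProduct.tmul_smul, TensorProduct.tmul_add, t1, t2, hfb m, ha m, t3]
  refine ⟨a0, hsym, aux_isUnit (R := R) a0 ?_⟩
  intro m hm
  rw [hfa ⟨m, hm⟩]
  exact hu ⟨m, hm⟩
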